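/- Let G be a cyclic group of odd order n with n dividing 2^j + 1 for some j ≥ 1, and let t be the number of distinct 2-cyclotomic cosets modulo n. Then the number of nonzero idempotents e ∈ F₂[G] with e = ê (equivalently, of LCD group codes in F₂[G]) is 2^t − 1. -/

import Mathlib

/-- The 2-cyclotomic coset modulo `n` containing `i`. -/
def cyclotomicCoset (n : ℕ) (i : ZMod n) : Set (ZMod n) :=
  {x | ∃ j : ℕ, x = i * 2 ^ j}

lemma aux_char2 {G : Type*} [Group G] (x : MonoidAlgebra (ZMod 2) G) : x + x = 0 := by
  have h : ∀ a : ZMod 2, a + a = 0 := by decide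
  apply MonoidAlgebra.coeff_injective
  refine Finsupp.ext fun g => ?_
  show x.coeff g + x.coeff g = 0
  exact h _

lemma aux_add_step {G : Type*} [CommGroup G] (f g : MonoidAlgebra (ZMod 2) G)
    (hf : (f * f).coeff = Finsupp.mapDomain (fun g : G => g * g) f.coeff)
    (hg : (g * g).coeff = Finsupp.mapDomain (fun g : G => g * g) g.coeff) :
    ((f + g) * (f + g)).coeff = Finsupp.mapDomain (fun g : G => g * g) (f + g).coeff := by
  have hfg : f * g + g * f = 0 := by rw [mul_comm g f]; exact aux_char2 _
  have expand : (f + g) * (f + g) = f * f + g * g + (f * g + g * f) := by ring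
  rw [expand, hfg, add_zero]
  simp only [MonoidAlgebra.coeff_add]
  rw [hf, hg, ← Finsupp.mapDomain_add]

lemma aux_single_step {G : Type*} [CommGroup G] (a : G) (b : ZMod 2) :
    ((MonoidAlgebra.single a b) * (MonoidAlgebra.single a b)).coeff
      = Finsupp.mapDomain (fun g : G => g * g) (Finsupp.single a b) := by
  have hb : ∀ b : ZMod 2, b * b = b := by decide
  rw [MonoidAlgebra.single_mul_single, hb, MonoidAlgebra.coeff_single, Finsupp.mapDomain_single]

lemma aux_mul_self {G : Type*} [CommGroup G] (e : MonoidAlgebra (ZMod 2) G) :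
    (e * e).coeff = Finsupp.mapDomain (fun g : G => g * g) e.coeff := by
  induction e using MonoidAlgebra.induction_linear with
  | zero => simp
  | add f g hf hg => exact aux_add_step f g hf hg
  | single a b => exact aux_single_step a b

lemma aux_fix_iff {G : Type*} {M : Type*} [AddCommMonoid M] {σ : G → G}
    (hσ : Function.Bijective σ) (e : G →₀ M) :
    Finsupp.mapDomain σ e = e ↔ ∀ g, e (σ g) = e g := by
  constructor
  · intro h g
    have h2 := Finsupp.mapDomain_apply hσ.injective e g
    rw [h] at h2
    exact h2
  · intro h
    refine Finsupp.ext fun x => ?_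
    obtain ⟨g, rfl⟩ := hσ.surjective x
    rw [Finsupp.mapDomain_apply hσ.injective, h g]

lemma aux_sq_bijective {G : Type*} [Group G] [Fintype G] {n : ℕ}
    (hcard : Fintype.card G = n) (hodd : Odd n) :
    Function.Bijective (fun g : G => g * g) := by
  have hpow : ∀ g : G, g ^ n = 1 := by
    intro g; rw [← hcard]; exact pow_card_eq_one
  have h2 : 2 * ((n + 1) / 2) = n + 1 := by
    obtain ⟨c, rfl⟩ := hodd; omega
  have key : ∀ g : G, (g * g) ^ ((n + 1) / 2) = g := by
    intro g
    calc (g * g) ^ ((n + 1) / 2) = (g ^ 2) ^ ((n + 1) / 2) := by rw [pow_two]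
    _ = g ^ (2 * ((n + 1) / 2)) := by rw [pow_mul]
    _ = g ^ (n + 1) := by rw [h2]
    _ = g ^ n * g := by rw [pow_succ]
    _ = g := by rw [hpow, one_mul]
  constructor
  · intro a b hab
    have := congrArg (fun x : G => x ^ ((n + 1) / 2)) hab
    simpa [key] using this
  · intro g
    refine ⟨g ^ ((n + 1) / 2), ?_⟩
    show g ^ ((n + 1) / 2) * g ^ ((n + 1) / 2) = g
    calc g ^ ((n + 1) / 2) * g ^ ((n + 1) / 2) = (g ^ ((n+1)/2)) ^ 2 := (pow_two _).symm
    _ = g ^ ((n + 1) / 2 * 2) := by rw [pow_mul]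
    _ = g ^ (n + 1) := by rw [mul_comm, h2]
    _ = g := by rw [pow_succ, hpow, one_mul]

lemma aux_pow_fix {G : Type*} [CommGroup G] (e : MonoidAlgebra (ZMod 2) G)
    (he : e * e = e) (m : ℕ) :
    Finsupp.mapDomain (fun g : G => g ^ (2 ^ m)) e.coeff = e.coeff := by
  have hσ : Finsupp.mapDomain (fun g : G => g * g) e.coeff = e.coeff :=
    (aux_mul_self e).symm.trans (congrArg MonoidAlgebra.coeff he)
  induction m with
  | zero =>
      have hid : (fun g : G => g ^ (2 ^ 0)) = id := funext fun g => by simp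
      rw [hid, Finsupp.mapDomain_id]
  | succ m ih =>
      have hc : (fun g : G => g ^ (2 ^ (m + 1)))
          = (fun g : G => g * g) ∘ (fun g : G => g ^ (2 ^ m)) := by
        funext g
        show g ^ (2 ^ (m + 1)) = g ^ (2 ^ m) * g ^ (2 ^ m)
        rw [← pow_add]
        congr 1
        rw [pow_succ, mul_two]
      rw [hc, Finsupp.mapDomain_comp, ih, hσ]

lemma aux_inv_fix {G : Type*} [CommGroup G] [Fintype G] {n j : ℕ}
    (hcard : Fintype.card G = n) (hjdvd : n ∣ 2 ^ j + 1)
    (e : MonoidAlgebra (ZMod 2) G) (he : e * e = e) :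
    Finsupp.mapDomain (fun g : G => g⁻¹) e.coeff = e.coeff := by
  have hid : (fun g : G => g⁻¹) = (fun g : G => g ^ (2 ^ j)) := by
    funext g
    obtain ⟨k, hk⟩ := hjdvd
    have hg1 : g ^ (2 ^ j + 1) = 1 := by
      rw [hk, pow_mul, ← hcard, pow_card_eq_one, one_pow]
    have : g ^ (2 ^ j) * g = 1 := by rw [← pow_succ]; exact hg1
    exact (eq_inv_of_mul_eq_one_left this).symm
  rw [hid]
  exact aux_pow_fix e he j

lemma aux_mem_coset_self {n : ℕ} (i : ZMod n) : i ∈ cyclotomicCoset n i :=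
  ⟨0, by simp⟩

lemma aux_coset_two {n m' : ℕ} (h2m : (2 : ZMod n) ^ (m' + 1) = 1) (i k : ZMod n) :
    2 * k ∈ cyclotomicCoset n i ↔ k ∈ cyclotomicCoset n i := by
  constructor
  · rintro ⟨b, hb⟩
    exact ⟨b + m', by linear_combination (2 : ZMod n) ^ m' * hb - k * h2m⟩
  · rintro ⟨b, rfl⟩
    exact ⟨b + 1, by ring⟩

lemma aux_coset_subset {n : ℕ} {B : Set (ZMod n)} (hB : ∀ k, 2 * k ∈ B ↔ k ∈ B)
    {i : ZMod n} (hi : i ∈ B) : cyclotomicCoset n i ⊆ B := by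
  rintro x ⟨b, rfl⟩
  induction b with
  | zero => simpa using hi
  | succ b ih =>
      have h : i * 2 ^ (b + 1) = 2 * (i * 2 ^ b) := by ring
      rw [h]
      exact (hB _).mpr ih

lemma aux_coset_eq {n m' : ℕ} (h2m : (2 : ZMod n) ^ (m' + 1) = 1) {i i' : ZMod n}
    (h : i ∈ cyclotomicCoset n i') : cyclotomicCoset n i = cyclotomicCoset n i' := by
  obtain ⟨a, rfl⟩ := h
  have h2inva : ((2 : ZMod n) ^ (m' + 1)) ^ a = 1 := by rw [h2m, one_pow]
  ext x
  constructor
  · rintro ⟨b, rfl⟩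
    exact ⟨a + b, by rw [pow_add]; ring⟩
  · rintro ⟨b, rfl⟩
    have hone : (2 : ZMod n) * 2 ^ m' = 1 := by rw [← pow_succ']; exact h2m
    have hu : (2 : ZMod n) ^ a * ((2 : ZMod n) ^ m') ^ a = 1 := by
      rw [← mul_pow, hone, one_pow]
    exact ⟨b + m' * a, by
      rw [pow_add, pow_mul]
      linear_combination (-(i' * (2 : ZMod n) ^ b)) * hu⟩

lemma aux_powerset_ncard {α : Type*} [Finite α] (C : Set (Set α)) :
    {T : Set (Set α) | T ⊆ C}.ncard = 2 ^ C.ncard := by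
  classical
  rw [← Nat.card_coe_set_eq]
  have e1 : ↥{T : Set (Set α) | T ⊆ C} ≃ Set ↥C := by
    refine ⟨fun T => {c : ↥C | (c : Set α) ∈ (T : Set (Set α))},
      fun U => ⟨Subtype.val '' U, by rintro S ⟨c, _, rfl⟩; exact c.2⟩, ?_, ?_⟩
    · rintro ⟨T, hT⟩
      refine Subtype.ext ?_
      ext S
      simp only [Set.mem_image, Set.mem_setOf_eq]
      constructor
      · rintro ⟨c, h1, rfl⟩; exact h1
      · intro hS; exact ⟨⟨S, hT hS⟩, hS, rfl⟩
    · intro U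
      ext c
      simp only [Set.mem_setOf_eq]
      exact Subtype.val_injective.mem_set_image
  rw [Nat.card_congr e1]
  haveI : Fintype ↥C := Fintype.ofFinite _
  rw [Nat.card_congr (Fintype.finsetEquivSet (α := ↥C)).symm, Nat.card_eq_fintype_card,
    Fintype.card_finset, ← Nat.card_eq_fintype_card, Nat.card_coe_set_eq]

lemma aux_count (n m' : ℕ) [NeZero n] (h2m : (2 : ZMod n) ^ (m' + 1) = 1) :
    {B : Set (ZMod n) | ∀ k, 2 * k ∈ B ↔ k ∈ B}.ncard
      = 2 ^ {S : Set (ZMod n) | ∃ i : ZMod n, S = cyclotomicCoset n i}.ncard := by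
  classical
  set C : Set (Set (ZMod n)) := {S | ∃ i : ZMod n, S = cyclotomicCoset n i} with hC
  set S2 : Set (Set (ZMod n)) := {B | ∀ k, 2 * k ∈ B ↔ k ∈ B} with hS2
  set Φ : Set (ZMod n) → Set (Set (ZMod n)) := fun B => {c | c ∈ C ∧ c ⊆ B} with hΦ
  have hmono : ∀ B B', B ∈ S2 → B' ∈ S2 → Φ B ⊆ Φ B' → B ⊆ B' := by
    intro B B' hB _ hsub x hx
    have hc : cyclotomicCoset n x ∈ Φ B := ⟨⟨x, rfl⟩, aux_coset_subset hB hx⟩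
    exact (hsub hc).2 (aux_mem_coset_self x)
  have hbij : Set.BijOn Φ S2 {T | T ⊆ C} := by
    refine ⟨fun B _ c hc => hc.1, ?_, ?_⟩
    · intro B hB B' hB' hEq
      exact le_antisymm (hmono B B' hB hB' hEq.le) (hmono B' B hB' hB hEq.ge)
    · intro T hT
      refine ⟨⋃₀ T, ?_, ?_⟩
      · intro k
        simp only [Set.mem_sUnion]
        constructor
        · rintro ⟨c, hcT, hkc⟩
          obtain ⟨i, rfl⟩ := hT hcT
          exact ⟨_, hcT, (aux_coset_two h2m i k).mp hkc⟩
        · rintro ⟨c, hcT, hkc⟩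
          obtain ⟨i, rfl⟩ := hT hcT
          exact ⟨_, hcT, (aux_coset_two h2m i k).mpr hkc⟩
      · ext c
        constructor
        · rintro ⟨⟨i, rfl⟩, hsub⟩
          obtain ⟨c', hc'T, hic'⟩ := hsub (aux_mem_coset_self i)
          obtain ⟨i', rfl⟩ := hT hc'T
          rw [aux_coset_eq h2m hic']
          exact hc'T
        · intro hcT
          exact ⟨hT hcT, Set.subset_sUnion_of_mem hcT⟩
  have him : Φ '' S2 = {T | T ⊆ C} := hbij.image_eq
  calc S2.ncard = (Φ '' S2).ncard := (Set.ncard_image_of_injOn hbij.injOn).symm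
  _ = {T : Set (Set (ZMod n)) | T ⊆ C}.ncard := by rw [him]
  _ = 2 ^ C.ncard := aux_powerset_ncard C

theorem count_lcd_group_codes_of_dvd {G : Type*} [Group G] [Fintype G]
    (hcyc : IsCyclic G) (n : ℕ) (hcard : Fintype.card G = n) (hodd : Odd n)
    (hdiv : ∃ j : ℕ, 1 ≤ j ∧ n ∣ 2 ^ j + 1)
    (t : ℕ) (ht : t = Set.ncard {S : Set (ZMod n) | ∃ i : ZMod n, S = cyclotomicCoset n i}) :
    Set.ncard {e : MonoidAlgebra (ZMod 2) G |
        e ≠ 0 ∧ e * e = e ∧ Finsupp.mapDomain (fun g : G => g⁻¹) e.coeff = e.coeff}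
      = 2 ^ t - 1 := by
  classical
  obtain ⟨j, hj1, hjdvd⟩ := hdiv
  haveI := hcyc
  letI : CommGroup G := IsCyclic.commGroup
  have hn0 : 0 < n := hcard ▸ Fintype.card_pos
  haveI : NeZero n := ⟨hn0.ne'⟩
  haveI : Finite (MonoidAlgebra (ZMod 2) G) :=
    Finite.of_equiv _ MonoidAlgebra.coeffEquiv.symm
  -- the power of two that is `1` mod `n`
  have h0 : ((2 ^ j + 1 : ℕ) : ZMod n) = 0 :=
    (ZMod.natCast_eq_zero_iff _ _).mpr hjdvd
  push_cast at h0
  have h2m : (2 : ZMod n) ^ (2 * j - 1 + 1) = 1 := by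
    have hj : 2 * j - 1 + 1 = j * 2 := by omega
    rw [hj, pow_mul]
    have hneg : (2 : ZMod n) ^ j = -1 := by linear_combination h0
    rw [hneg]; ring
  -- rewrite the set as nonzero idempotents
  set S1 : Set (MonoidAlgebra (ZMod 2) G) := {e | e * e = e} with hS1
  have hset : {e : MonoidAlgebra (ZMod 2) G |
      e ≠ 0 ∧ e * e = e ∧ Finsupp.mapDomain (fun g : G => g⁻¹) e.coeff = e.coeff} = S1 \ {0} := by
    ext e
    simp only [hS1, Set.mem_setOf_eq, Set.mem_diff, Set.mem_singleton_iff]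
    constructor
    · rintro ⟨h0', h1, _⟩; exact ⟨h1, h0'⟩
    · rintro ⟨h1, h0'⟩
      exact ⟨h0', h1, aux_inv_fix hcard hjdvd e h1⟩
  have h0S : (0 : MonoidAlgebra (ZMod 2) G) ∈ S1 := by
    show (0 : MonoidAlgebra (ZMod 2) G) * 0 = 0
    rw [mul_zero]
  -- the generator and the identification of `G` with `ZMod n`
  obtain ⟨γ, hγ⟩ := hcyc.exists_generator
  have hord : orderOf γ = n := by
    rw [orderOf_eq_card_of_forall_mem_zpowers hγ, Nat.card_eq_fintype_card, hcard]
  set ι : ZMod n → G := fun k => γ ^ k.val with hι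
  have hpowval : ∀ a : ℕ, γ ^ ((a : ZMod n)).val = γ ^ a := by
    intro a
    rw [ZMod.val_natCast]
    have := pow_mod_orderOf γ a
    rw [hord] at this
    exact this
  have hcastval : ∀ k : ZMod n, ((k.val : ℕ) : ZMod n) = k := fun k =>
    ZMod.natCast_rightInverse k
  have hι2 : ∀ k : ZMod n, ι (2 * k) = ι k * ι k := by
    intro k
    have h1 : (2 : ZMod n) * k = ((2 * k.val : ℕ) : ZMod n) := by
      push_cast [hcastval]
      ring
    rw [h1]
    show γ ^ (((2 * k.val : ℕ) : ZMod n)).val = γ ^ k.val * γ ^ k.val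
    rw [hpowval, ← pow_add, two_mul]
  have hιbij : Function.Bijective ι := by
    constructor
    · intro a b hab
      have hval : a.val = b.val := by
        refine pow_injOn_Iio_orderOf ?_ ?_ hab
        · simp only [Set.mem_Iio, hord]; exact ZMod.val_lt a
        · simp only [Set.mem_Iio, hord]; exact ZMod.val_lt b
      calc a = ((a.val : ℕ) : ZMod n) := (hcastval a).symm
      _ = ((b.val : ℕ) : ZMod n) := by rw [hval]
      _ = b := hcastval b
    · intro x
      obtain ⟨m, hm⟩ := mem_powers_iff_mem_zpowers.mpr (hγ x)
      refine ⟨(m : ZMod n), ?_⟩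
      show γ ^ ((m : ZMod n)).val = x
      rw [hpowval]; exact hm
  set ιE : ZMod n ≃ G := Equiv.ofBijective ι hιbij with hιE
  have hιEapp : ∀ k, ιE k = ι k := fun k => rfl
  have hsqbij : Function.Bijective (fun g : G => g * g) := aux_sq_bijective hcard hodd
  have hfix : ∀ e : MonoidAlgebra (ZMod 2) G, e ∈ S1 ↔ ∀ g : G, e.coeff (g * g) = e.coeff g := by
    intro e
    constructor
    · intro he; exact (aux_fix_iff hsqbij e.coeff).mp ((aux_mul_self e).symm.trans (congrArg MonoidAlgebra.coeff he))
    · intro h; exact MonoidAlgebra.coeff_injective ((aux_mul_self e).trans ((aux_fix_iff hsqbij e.coeff).mpr h))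
  set S2 : Set (Set (ZMod n)) := {B | ∀ k, 2 * k ∈ B ↔ k ∈ B} with hS2
  set F : MonoidAlgebra (ZMod 2) G → Set (ZMod n) := fun e => {k | e.coeff (ι k) = 1} with hF
  have hsymm2 : ∀ g : G, ιE.symm (g * g) = 2 * ιE.symm g := by
    intro g
    apply ιE.injective
    rw [Equiv.apply_symm_apply]
    show g * g = ι (2 * ιE.symm g)
    rw [hι2, ← hιEapp, Equiv.apply_symm_apply]
  have hFbij : Set.BijOn F S1 S2 := by
    refine ⟨?_, ?_, ?_⟩
    · intro e he k
      show e.coeff (ι (2 * k)) = 1 ↔ e.coeff (ι k) = 1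
      rw [hι2 k, (hfix e).mp he (ι k)]
    · intro e he e' he' hEq
      refine MonoidAlgebra.coeff_injective (Finsupp.ext fun g => ?_)
      obtain ⟨k, rfl⟩ := hιbij.surjective g
      have hk : e.coeff (ι k) = 1 ↔ e'.coeff (ι k) = 1 := Set.ext_iff.mp hEq k
      have hd : ∀ a b : ZMod 2, (a = 1 ↔ b = 1) → a = b := by decide
      exact hd _ _ hk
    · intro B hB
      set e : MonoidAlgebra (ZMod 2) G :=
        MonoidAlgebra.ofCoeff (Finsupp.equivFunOnFinite.symm (fun g => if ιE.symm g ∈ B then 1 else 0)) with he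
      have happ : ∀ g : G, e.coeff g = if ιE.symm g ∈ B then 1 else 0 := fun g => rfl
      have heS1 : e ∈ S1 := by
        refine (hfix e).mpr fun g => ?_
        rw [happ, happ, hsymm2 g]
        exact if_congr (hB (ιE.symm g)) rfl rfl
      refine ⟨e, heS1, ?_⟩
      ext k
      show e.coeff (ι k) = 1 ↔ k ∈ B
      rw [show ι k = ιE k from rfl, happ, Equiv.symm_apply_apply]
      split_ifs with h
      · simpa using h
      · simpa [zero_ne_one] using h
  have hcount : S1.ncard = 2 ^ t := by
    calc S1.ncard = (F '' S1).ncard := (Set.ncard_image_of_injOn hFbij.injOn).symm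
    _ = S2.ncard := by rw [hFbij.image_eq]
    _ = 2 ^ t := by rw [hS2, aux_count n (2 * j - 1) h2m, ht]
  rw [hset, Set.ncard_diff_singleton_of_mem h0S, hcount]
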